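/- Let U ⊆ ℝ^n be a nonempty connected open set and let f : U → ℝ be a rational function that is regular on axis-parallel intervals. If there exists a nonempty open subset U₀ ⊆ U such that f vanishes on a dense subset of U₀, then f is identically equal to 0 on U. (Lemma 7.6 in the case where every factor is the affine line.) -/

import Mathlib

open MvPolynomial

/-- `f` is regular on axis-parallel open intervals contained in `U`: on every open
interval `I ⊆ ℝ` whose image under `t ↦ x + t • eᵢ` lies in `U`, and at every `t₀ ∈ I`,
the function `t ↦ f (x + t • eᵢ)` is represented on `I` by a quotient of one-variable
polynomials whose denominator does not vanish at `t₀`. -/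
def RegularOnAxisParallelIntervals (n : ℕ) (U : Set (Fin n → ℝ))
    (f : (Fin n → ℝ) → ℝ) : Prop :=
  ∀ (i : Fin n) (x : Fin n → ℝ) (I : Set ℝ), IsOpen I → I.OrdConnected →
    (∀ t ∈ I, x + t • (Pi.single i 1 : Fin n → ℝ) ∈ U) →
    ∀ t₀ ∈ I, ∃ p q : Polynomial ℝ, q.eval t₀ ≠ 0 ∧
      ∀ t ∈ I, q.eval t ≠ 0 →
        f (x + t • (Pi.single i 1 : Fin n → ℝ)) = p.eval t / q.eval t

lemma cons_add_smul_single {n : ℕ} (c : ℝ) (x' : Fin n → ℝ) (i : Fin n) (t : ℝ) :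
    (Fin.cons c x' : Fin (n+1) → ℝ) + t • (Pi.single i.succ 1 : Fin (n+1) → ℝ) =
      Fin.cons c (x' + t • (Pi.single i 1 : Fin n → ℝ)) := by
  funext j
  refine Fin.cases ?_ (fun j => ?_) j
  · simp [Pi.single_apply, (Fin.succ_ne_zero i).symm]
  · simp [Pi.single_apply, Fin.succ_inj]

lemma continuous_finCons' {n : ℕ} :
    Continuous (fun p : ℝ × (Fin n → ℝ) => (Fin.cons p.1 p.2 : Fin (n+1) → ℝ)) := by
  apply continuous_pi; intro j
  refine Fin.cases ?_ (fun j => ?_) j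
  · simpa using continuous_fst
  · simpa using (show Continuous fun a : ℝ × (Fin n → ℝ) => a.2 j from (continuous_apply j).comp continuous_snd)

lemma open_real_infinite {A : Set ℝ} (hA : IsOpen A) (hne : A.Nonempty) : A.Infinite := by
  obtain ⟨a, ha⟩ := hne
  obtain ⟨δ, hδ, hball⟩ := Metric.isOpen_iff.mp hA a ha
  have : Set.Ioo (a - δ) (a + δ) ⊆ A := by rw [← Real.ball_eq_Ioo]; exact hball
  exact (Set.Ioo_infinite (by linarith)).mono this

lemma eval_evalC {n : ℕ} (Q : Polynomial (MvPolynomial (Fin n) ℝ)) (c : ℝ) (x' : Fin n → ℝ) :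
    MvPolynomial.eval x' (Polynomial.eval (MvPolynomial.C c) Q) =
      Polynomial.eval c (Q.map (MvPolynomial.eval x')) := by
  rw [Polynomial.eval_map]
  rw [show Polynomial.eval (MvPolynomial.C c) Q
      = Polynomial.eval₂ (RingHom.id _) (MvPolynomial.C c) Q from rfl]
  rw [Polynomial.hom_eval₂]
  simp

lemma mv_eq_zero_of_vanish : ∀ (n : ℕ) (p : MvPolynomial (Fin n) ℝ)
    (O : Set (Fin n → ℝ)), IsOpen O → O.Nonempty → (∀ x ∈ O, eval x p = 0) → p = 0 := by
  intro n
  induction n with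
  | zero =>
    intro p O hO hne hvan
    obtain ⟨a, rfl⟩ := MvPolynomial.C_surjective (Fin 0) p
    obtain ⟨x, hx⟩ := hne
    have := hvan x hx
    simp only [eval_C] at this
    rw [this, map_zero]
  | succ n IH =>
    intro p O hO hne hvan
    obtain ⟨x, hx⟩ := hne
    set Q := finSuccEquiv ℝ n p with hQdef
    have hS : IsOpen ((fun q : ℝ × (Fin n → ℝ) => (Fin.cons q.1 q.2 : Fin (n+1) → ℝ)) ⁻¹' O) :=
      hO.preimage continuous_finCons'
    have hxS : (x 0, Fin.tail x) ∈
        ((fun q : ℝ × (Fin n → ℝ) => (Fin.cons q.1 q.2 : Fin (n+1) → ℝ)) ⁻¹' O) := by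
      simp only [Set.mem_preimage, Fin.cons_self_tail]; exact hx
    obtain ⟨A, B, hAopen, hBopen, hxA, hxB, hAB⟩ := isOpen_prod_iff.mp hS _ _ hxS
    have hQ : Q = 0 := by
      apply Polynomial.ext
      intro k
      rw [Polynomial.coeff_zero]
      apply IH _ B hBopen ⟨_, hxB⟩
      intro x' hx'
      have hmap : Q.map (MvPolynomial.eval x') = 0 := by
        apply Polynomial.eq_zero_of_infinite_isRoot
        apply (open_real_infinite hAopen ⟨_, hxA⟩).mono
        intro c hc
        have hmem : (Fin.cons c x' : Fin (n+1) → ℝ) ∈ O := hAB (Set.mk_mem_prod hc hx')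
        have := hvan _ hmem
        rw [eval_eq_eval_mv_eval'] at this
        exact this
      have := congrArg (fun P => Polynomial.coeff P k) hmap
      simpa [Polynomial.coeff_map] using this
    have : p = (finSuccEquiv ℝ n).symm Q := by rw [hQdef]; simp
    rw [this, hQ, map_zero]

lemma key_lemma : ∀ (n : ℕ) (U : Set (Fin n → ℝ)), IsOpen U →
    ∀ (f : (Fin n → ℝ) → ℝ) (q : MvPolynomial (Fin n) ℝ), q ≠ 0 →
    RegularOnAxisParallelIntervals n U f →
    (∀ x ∈ U, eval x q ≠ 0 → f x = 0) → ∀ x ∈ U, f x = 0 := by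
  intro n
  induction n with
  | zero =>
    intro U hU f q hq hreg h0 x hx
    obtain ⟨a, rfl⟩ := MvPolynomial.C_surjective (Fin 0) q
    have ha : a ≠ 0 := fun h => hq (by rw [h, map_zero])
    exact h0 x hx (by simp [ha])
  | succ n IH =>
    intro U hU f q hq hreg h0 x hx
    set Q := finSuccEquiv ℝ n q with hQdef
    have hQ : Q ≠ 0 := by
      intro h
      apply hq
      have : q = (finSuccEquiv ℝ n).symm Q := by rw [hQdef]; simp
      rw [this, h, map_zero]
    set Bad : Set ℝ := {c : ℝ | Polynomial.eval (MvPolynomial.C c) Q = 0} with hBaddef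
    have hBadfin : Bad.Finite := by
      have : Bad ⊆ (fun c : ℝ => MvPolynomial.C c) ⁻¹' {y | Q.IsRoot y} := fun c hc => hc
      exact Set.Finite.subset
        ((Polynomial.finite_setOf_isRoot hQ).preimage (MvPolynomial.C_injective _ _).injOn) this
    -- Claim 1: good slices vanish
    have claim1 : ∀ y ∈ U, Polynomial.eval (MvPolynomial.C (y 0)) Q ≠ 0 → f y = 0 := by
      intro y hy hqc
      set c := y 0 with hcdef
      set V : Set (Fin n → ℝ) := {x' | (Fin.cons c x' : Fin (n+1) → ℝ) ∈ U} with hVdef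
      have hVopen : IsOpen V :=
        hU.preimage (continuous_finCons'.comp (continuous_const.prodMk continuous_id))
      set g : (Fin n → ℝ) → ℝ := fun x' => f (Fin.cons c x') with hgdef
      have hreg' : RegularOnAxisParallelIntervals n V g := by
        intro i x' I hIopen hIconn hImem t₀ ht₀
        obtain ⟨pp, qq, hqq, hrep⟩ := hreg i.succ (Fin.cons c x') I hIopen hIconn
          (fun t ht => by rw [cons_add_smul_single]; exact hImem t ht) t₀ ht₀
        exact ⟨pp, qq, hqq, fun t ht hqt => by
          have := hrep t ht hqt
          rw [cons_add_smul_single] at this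
          exact this⟩
      have h0' : ∀ x' ∈ V, eval x' (Polynomial.eval (MvPolynomial.C c) Q) ≠ 0 → g x' = 0 := by
        intro x' hx' hne
        apply h0 _ hx'
        rw [eval_eq_eval_mv_eval', ← hQdef, ← eval_evalC]
        exact hne
      have := IH V hVopen g _ hqc hreg' h0' (Fin.tail y)
        (by simp only [hVdef, Set.mem_setOf_eq, hcdef, Fin.cons_self_tail]; exact hy)
      rw [hgdef] at this
      simpa [hcdef, Fin.cons_self_tail] using this
    by_cases hc : Polynomial.eval (MvPolynomial.C (x 0)) Q = 0
    · -- bad slice: use regularity along direction 0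
      obtain ⟨ε, hε, hball⟩ := Metric.isOpen_iff.mp hU x hx
      have hline : ∀ t ∈ Set.Ioo (-ε) ε,
          x + t • (Pi.single (0 : Fin (n+1)) 1 : Fin (n+1) → ℝ) ∈ U := by
        intro t ht
        apply hball
        rw [Metric.mem_ball, dist_pi_lt_iff hε]
        intro j
        have : dist (x j + t * (Pi.single (0 : Fin (n+1)) (1:ℝ) : Fin (n+1) → ℝ) j) (x j)
            = |t * (Pi.single (0 : Fin (n+1)) (1:ℝ) : Fin (n+1) → ℝ) j| := by
          rw [Real.dist_eq]; ring_nf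
        simp only [Pi.add_apply, Pi.smul_apply, smul_eq_mul]
        rw [this]
        rcases eq_or_ne j 0 with rfl | hj
        · simp only [Pi.single_eq_same, mul_one]
          rw [abs_lt]; exact ⟨ht.1, ht.2⟩
        · simp [Pi.single_eq_of_ne hj, hε]
      obtain ⟨pp, qq, hqq0, hrep⟩ := hreg 0 x (Set.Ioo (-ε) ε) isOpen_Ioo
        Set.ordConnected_Ioo hline 0 ⟨by linarith, hε⟩
      have hqqne : qq ≠ 0 := fun h => hqq0 (by rw [h]; simp)
      have hpp : pp = 0 := by
        apply Polynomial.eq_zero_of_infinite_isRoot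
        have hsub : Set.Ioo (-ε) ε \ ({t | qq.IsRoot t} ∪ (fun t => x 0 + t) ⁻¹' Bad)
            ⊆ {t | pp.IsRoot t} := by
          rintro t ⟨htI, hnot⟩
          simp only [Set.mem_union, Set.mem_setOf_eq, Set.mem_preimage, not_or] at hnot
          obtain ⟨hqt, hbad⟩ := hnot
          have hyU : x + t • (Pi.single (0 : Fin (n+1)) 1 : Fin (n+1) → ℝ) ∈ U := hline t htI
          have hy0 : (x + t • (Pi.single (0 : Fin (n+1)) 1 : Fin (n+1) → ℝ)) 0 = x 0 + t := by
            simp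
          have hfy : f (x + t • (Pi.single (0 : Fin (n+1)) 1 : Fin (n+1) → ℝ)) = 0 := by
            apply claim1 _ hyU
            rw [hy0]
            exact hbad
          have := hrep t htI hqt
          rw [hfy] at this
          have := (div_eq_zero_iff.mp this.symm).resolve_right hqt
          exact this
        apply Set.Infinite.mono hsub
        apply Set.Infinite.diff (Set.Ioo_infinite (by linarith))
        exact ((Polynomial.finite_setOf_isRoot hqqne).union
          (hBadfin.preimage (add_right_injective (x 0)).injOn))
      have := hrep 0 ⟨by linarith, hε⟩ hqq0
      rw [hpp] at this
      simpa using this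
    · exact claim1 x hx hc

/-- **Lemma 7.6** (case where every factor is the affine line). A rational function on a
nonempty connected open set `U ⊆ ℝⁿ` that is regular on axis-parallel intervals and
vanishes on a dense subset of some nonempty open `U₀ ⊆ U` is identically zero on `U`. -/
theorem vanishes_of_rational_and_vanishing_on_dense_subset
    (n : ℕ) (U : Set (Fin n → ℝ)) (hU : IsOpen U) (hne : U.Nonempty)
    (hconn : IsConnected U) (f : (Fin n → ℝ) → ℝ)
    (hrat : ∃ p q : MvPolynomial (Fin n) ℝ, q ≠ 0 ∧
      ∀ x ∈ U, eval x q ≠ 0 → f x = eval x p / eval x q)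
    (hreg : RegularOnAxisParallelIntervals n U f)
    (U₀ : Set (Fin n → ℝ)) (hU₀sub : U₀ ⊆ U) (hU₀ne : U₀.Nonempty)
    (hU₀open : IsOpen U₀)
    (D : Set (Fin n → ℝ)) (hDsub : D ⊆ U₀) (hDdense : U₀ ⊆ closure D)
    (hDzero : ∀ x ∈ D, f x = 0) :
    ∀ x ∈ U, f x = 0 := by
  obtain ⟨p, q, hq, hpq⟩ := hrat
  set O : Set (Fin n → ℝ) := U₀ ∩ {x | eval x q ≠ 0} with hOdef
  have hOopen : IsOpen O :=
    hU₀open.inter (isOpen_compl_singleton.preimage (MvPolynomial.continuous_eval q))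
  have hOne : O.Nonempty := by
    rcases Set.eq_empty_or_nonempty O with h | h
    · exfalso
      apply hq
      apply mv_eq_zero_of_vanish n q U₀ hU₀open hU₀ne
      intro x hx
      by_contra hxq
      exact Set.eq_empty_iff_forall_notMem.mp h x ⟨hx, hxq⟩
    · exact h
  have hp0 : p = 0 := by
    apply mv_eq_zero_of_vanish n p O hOopen hOne
    intro y hy
    have hcl : y ∈ closure (O ∩ D) :=
      hOopen.inter_closure ⟨hy, hDdense hy.1⟩
    have heq : Set.EqOn (fun x => eval x p) (fun _ => (0:ℝ)) (O ∩ D) := by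
      rintro z ⟨hzO, hzD⟩
      have hfz : f z = 0 := hDzero z hzD
      have := hpq z (hU₀sub hzO.1) hzO.2
      rw [hfz] at this
      exact (div_eq_zero_iff.mp this.symm).resolve_right hzO.2
    have := heq.closure (MvPolynomial.continuous_eval p) continuous_const
    exact this hcl
  apply key_lemma n U hU f q hq hreg
  intro x hx hqx
  rw [hpq x hx hqx, hp0]
  simp
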